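/- There exists a real number α₀ with 0 < α₀ < 1/2 such that the following holds for every α ∈ [α₀, 1/2]: let β ≥ 0 be the real number determined by α² − β·√(1−α²) = −α, and let γ ≥ 0 be a real number with α² + β² + γ² = 1; then every triple λ₁, λ₂, λ₃ ∈ ℂ satisfying |−α + √(1−α²)·λ_j| = 1 and 1 − √3·γ ≤ |−α − β·λ_j| ≤ 1 + √3·γ for j = 1, 2, 3 has λ₁ + λ₂ + λ₃ ≠ 0. -/

import Mathlib

private lemma aux_xbound (A s x R : ℝ) (hA : (1.28:ℝ) ≤ A) (hs : 0 < s)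
    (hid : A*(s*x) = R) (hub : R ≤ 0.0893*s) (hlb : -0.0868*s ≤ R) :
    -0.07 ≤ x ∧ x ≤ 0.07 := by
  constructor
  · by_contra h
    push_neg at h
    have hsx : s*x < -0.07*s := by nlinarith [mul_pos hs (by linarith : (0:ℝ) < -0.07 - x)]
    have h1 : A*(s*x) ≤ 1.28*(s*x) :=
      mul_le_mul_of_nonpos_right hA (by linarith)
    linarith
  · by_contra h
    push_neg at h
    have hsx : 0.07*s < s*x := by nlinarith [mul_pos hs (by linarith : (0:ℝ) < x - 0.07)]
    have h1 : 1.28*(s*x) ≤ A*(s*x) :=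
      mul_le_mul_of_nonneg_right hA (by linarith)
    linarith

private lemma aux_Abound (α β : ℝ) (hα1 : 0.4999 ≤ α) (hβlb : 0.7498 ≤ β) :
    (1.28:ℝ) ≤ 2*α*(α^2+α+β^2) := by
  have ha2 : 0.2499 ≤ α^2 := by nlinarith
  have hb2 : 0.562 ≤ β^2 := by nlinarith
  have hsum' : (1.3118:ℝ) ≤ α^2 + α + β^2 := by linarith
  nlinarith [mul_le_mul hα1 hsum' (by norm_num) (by linarith : (0:ℝ) ≤ α)]

private lemma aux_brbound (α β γ x y t : ℝ)
    (ht0 : 0 ≤ t) (htub : t ≤ 0.0434) (ht2 : t^2 = 3*γ^2)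
    (hγ0 : 0 ≤ γ) (hγ2 : γ^2 ≤ 0.0006)
    (hNub : (α + β*x)^2 + (β*y)^2 ≤ (1+t)^2)
    (hNlb : (1-t)^2 ≤ (α + β*x)^2 + (β*y)^2) :
    -0.0868 ≤ (α + β*x)^2 + (β*y)^2 - 1 + γ^2 ∧
    (α + β*x)^2 + (β*y)^2 - 1 + γ^2 ≤ 0.0893 := by
  constructor
  · nlinarith [hNlb, sq_nonneg t, sq_nonneg γ]
  · nlinarith [hNub]

private lemma aux_rhs_ub (s b g : ℝ) (hs0 : 0 ≤ s) (hs_ub : s ≤ 1)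
    (hbr : b + g ≤ 0.0893) :
    s^2*b + s^2*g ≤ 0.0893*s := by
  have h1 : s^2*(b+g) ≤ s^2*0.0893 := mul_le_mul_of_nonneg_left hbr (sq_nonneg s)
  have h2 : (0:ℝ) ≤ s*(1-s) := mul_nonneg hs0 (by linarith)
  nlinarith [h1, h2]

private lemma aux_rhs_lb (s b g : ℝ) (hs0 : 0 ≤ s) (hs_ub : s ≤ 1)
    (hbr : -0.0868 ≤ b + g) :
    -0.0868*s ≤ s^2*b + s^2*g := by
  have h1 : s^2*(-0.0868) ≤ s^2*(b+g) := mul_le_mul_of_nonneg_left hbr (sq_nonneg s)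
  have h2 : (0:ℝ) ≤ s*(1-s) := mul_nonneg hs0 (by linarith)
  nlinarith [h1, h2]

set_option maxHeartbeats 1000000 in
private lemma aux_ybound (α s x y : ℝ) (hα0 : 0 ≤ α) (hα2 : α ≤ 1/2)
    (hs_lb : 0.866 ≤ s) (hs_ub : s ≤ 1)
    (hxl : -0.07 ≤ x) (hxu : x ≤ 0.07)
    (hy2eq : s^2 * y^2 = s^2 + 2*α*(s*x) - s^2*x^2) :
    0.89 ≤ y^2 ∧ y^2 ≤ 1.09 := by
  have hs0 : (0:ℝ) ≤ s := by linarith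
  have hs_pos : (0:ℝ) < s := by linarith
  have hx2 : x^2 ≤ 0.0049 := by nlinarith [mul_nonneg (by linarith : (0:ℝ) ≤ 0.07 - x) (by linarith : (0:ℝ) ≤ x + 0.07)]
  have hs2_lb : (0.749:ℝ) ≤ s^2 := by nlinarith
  have hs2x2 : s^2*x^2 ≤ 0.0049 := by
    nlinarith [mul_le_mul_of_nonneg_left hx2 (sq_nonneg s), sq_nonneg s]
  have h2ax : 2*α*(s*x) ≤ 0.07*s := by
    nlinarith [mul_nonneg (mul_nonneg (by linarith : (0:ℝ) ≤ 2*α) hs0) (by linarith : (0:ℝ) ≤ 0.07 - x),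
      mul_nonneg hs0 (by linarith : (0:ℝ) ≤ 1 - 2*α)]
  have h2ax' : -0.07*s ≤ 2*α*(s*x) := by
    nlinarith [mul_nonneg (mul_nonneg (by linarith : (0:ℝ) ≤ 2*α) hs0) (by linarith : (0:ℝ) ≤ x + 0.07),
      mul_nonneg hs0 (by linarith : (0:ℝ) ≤ 1 - 2*α)]
  constructor
  · have key : 0.89*s^2 ≤ s^2*y^2 := by linarith
    nlinarith [key, mul_pos hs_pos hs_pos]
  · have key : s^2*y^2 ≤ 1.09*s^2 := by
      have h09 : (0:ℝ) ≤ s*(0.09*s - 0.07) := mul_nonneg hs0 (by linarith)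
      linarith [h09, mul_nonneg (sq_nonneg s) (sq_nonneg x)]
    nlinarith [key, mul_pos hs_pos hs_pos]

private lemma aux_yfinal (y : ℝ) (h1 : 0.89 ≤ y^2) (h2 : y^2 ≤ 1.09) :
    (0.94 ≤ y ∧ y ≤ 1.05) ∨ (y ≤ -0.94 ∧ -1.05 ≤ y) := by
  rcases le_or_gt 0 y with hy | hy
  · left; constructor <;> nlinarith
  · right; constructor <;> nlinarith

private lemma aux_main (α β γ s x y t : ℝ)
    (hα1 : 0.4999 ≤ α) (hα2 : α ≤ 1/2)
    (hs0 : 0 ≤ s) (hs2 : s^2 = 1 - α^2) (hs_lb : 0.866 ≤ s) (hs_ub : s ≤ 1)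
    (hbs : β * s = α^2 + α) (hβ0 : 0 ≤ β) (hβlb : 0.7498 ≤ β)
    (hγ0 : 0 ≤ γ) (hγ2 : γ^2 ≤ 0.0006)
    (ht0 : 0 ≤ t) (htub : t ≤ 0.0434) (ht2 : t^2 = 3*γ^2)
    (hsum : α^2 + β^2 + γ^2 = 1)
    (e1 : (-α + s*x)^2 + (s*y)^2 = 1)
    (hNub : (α + β*x)^2 + (β*y)^2 ≤ (1+t)^2)
    (hNlb : (1-t)^2 ≤ (α + β*x)^2 + (β*y)^2) :
    (0.94 ≤ y ∧ y ≤ 1.05) ∨ (y ≤ -0.94 ∧ -1.05 ≤ y) := by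
  have hs_pos : (0:ℝ) < s := by linarith
  have hid : 2*α*(α^2+α+β^2) * (s*x)
      = s^2*((α + β*x)^2 + (β*y)^2 - 1) + s^2*γ^2 := by
    linear_combination (-(β^2)) * e1 + β^2 * hs2 - 2*α*s*x * hbs - s^2 * hsum
  obtain ⟨hbr_lb, hbr_ub⟩ := aux_brbound α β γ x y t ht0 htub ht2 hγ0 hγ2 hNub hNlb
  have hA := aux_Abound α β hα1 hβlb
  obtain ⟨hxl, hxu⟩ := aux_xbound (2*α*(α^2+α+β^2)) s x
      (s^2*((α + β*x)^2 + (β*y)^2 - 1) + s^2*γ^2) hA hs_pos hid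
      (aux_rhs_ub s ((α + β*x)^2 + (β*y)^2 - 1) (γ^2) hs0 hs_ub hbr_ub)
      (aux_rhs_lb s ((α + β*x)^2 + (β*y)^2 - 1) (γ^2) hs0 hs_ub hbr_lb)
  have hy2eq : s^2 * y^2 = s^2 + 2*α*(s*x) - s^2*x^2 := by
    linear_combination e1 - hs2
  obtain ⟨h1, h2⟩ := aux_ybound α s x y (by linarith) hα2 hs_lb hs_ub hxl hxu hy2eq
  exact aux_yfinal y h1 h2

set_option maxHeartbeats 1000000 in
/-- There is `0 < α₀ < 1/2` such that for every `α ∈ [α₀, 1/2]`, with `β, γ ≥ 0` determined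
by `α² - β√(1-α²) = -α` and `α² + β² + γ² = 1`, every triple `λ₁, λ₂, λ₃ ∈ ℂ` satisfying
`|-α + √(1-α²)·λⱼ| = 1` and `1 - √3·γ ≤ |-α - β·λⱼ| ≤ 1 + √3·γ` has nonzero sum. -/
theorem exists_alpha0_sum_ne_zero :
    ∃ α₀ : ℝ, 0 < α₀ ∧ α₀ < 1 / 2 ∧
      ∀ α ∈ Set.Icc α₀ (1 / 2 : ℝ), ∀ β γ : ℝ, 0 ≤ β → 0 ≤ γ →
        α ^ 2 - β * Real.sqrt (1 - α ^ 2) = -α →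
        α ^ 2 + β ^ 2 + γ ^ 2 = 1 →
        ∀ lam : Fin 3 → ℂ,
          (∀ j, ‖-(α : ℂ) + (Real.sqrt (1 - α ^ 2) : ℝ) * lam j‖ = 1) →
          (∀ j, 1 - Real.sqrt 3 * γ ≤ ‖-(α : ℂ) - (β : ℂ) * lam j‖ ∧
                ‖-(α : ℂ) - (β : ℂ) * lam j‖ ≤ 1 + Real.sqrt 3 * γ) →
          lam 0 + lam 1 + lam 2 ≠ 0 := by
  refine ⟨0.4999, by norm_num, by norm_num, ?_⟩
  rintro α ⟨hα1, hα2⟩ β γ hβ0 hγ0 hβeq hsum lam hA hB hzero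
  set s := Real.sqrt (1 - α ^ 2) with hs_def
  have hs0 : 0 ≤ s := Real.sqrt_nonneg _
  have hs2 : s ^ 2 = 1 - α ^ 2 := Real.sq_sqrt (by nlinarith)
  have hs_ub : s ≤ 1 := by nlinarith [hs2, hs0, sq_nonneg α]
  have hs_lb : 0.866 ≤ s := by nlinarith [hs2, hs0, hα2]
  have hbs : β * s = α ^ 2 + α := by linarith [hβeq]
  have hβlb : 0.7498 ≤ β := by
    nlinarith [mul_nonneg hβ0 (by linarith : (0:ℝ) ≤ 1 - s), hα1, sq_nonneg (α - 0.4999)]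
  have hγs : γ ^ 2 * s ^ 2 = (1 - α ^ 2) ^ 2 - (α ^ 2 + α) ^ 2 := by
    linear_combination (γ^2 + β^2) * hs2 + (1 - α^2) * hsum - (β*s + α^2 + α) * hbs
  have hs2_lb : 0.75 ≤ s ^ 2 := by nlinarith [hs2, hα2, hα1]
  have hrhs045 : (1 - α ^ 2) ^ 2 - (α ^ 2 + α) ^ 2 ≤ 0.00045 := by
    nlinarith [hα1, hα2, mul_nonneg (by linarith : (0:ℝ) ≤ α - 0.4999) (by linarith : (0:ℝ) ≤ 1/2 - α), sq_nonneg (α - 0.4999)]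
  have hγ2 : γ ^ 2 ≤ 0.0006 := by
    nlinarith [hγs, hrhs045, mul_le_mul_of_nonneg_left hs2_lb (sq_nonneg γ)]
  have hγub : γ ≤ 0.025 := by nlinarith [hγ2, hγ0]
  have h3sq : Real.sqrt 3 ^ 2 = 3 := Real.sq_sqrt (by norm_num)
  have h30 : 0 ≤ Real.sqrt 3 := Real.sqrt_nonneg 3
  have h3ub : Real.sqrt 3 ≤ 1.7321 := by nlinarith [h3sq, h30]
  have ht0 : 0 ≤ Real.sqrt 3 * γ := mul_nonneg h30 hγ0
  have htub : Real.sqrt 3 * γ ≤ 0.0434 := by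
    nlinarith [mul_le_mul h3ub hγub hγ0 (by norm_num : (0:ℝ) ≤ 1.7321)]
  have ht2 : (Real.sqrt 3 * γ)^2 = 3*γ^2 := by
    rw [mul_pow, h3sq]
  have key : ∀ j, (0.94 ≤ (lam j).im ∧ (lam j).im ≤ 1.05) ∨
      ((lam j).im ≤ -0.94 ∧ -1.05 ≤ (lam j).im) := by
    intro j
    have e1 : (-α + s * (lam j).re) ^ 2 + (s * (lam j).im) ^ 2 = 1 := by
      have h2 := congrArg (· ^ 2) (hA j)
      simp only [Complex.sq_norm, Complex.normSq_apply] at h2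
      simp [Complex.add_re, Complex.add_im, Complex.mul_re, Complex.mul_im] at h2
      nlinarith [h2]
    have nB : ‖-(α : ℂ) - (β : ℂ) * lam j‖ ^ 2
        = (α + β * (lam j).re) ^ 2 + (β * (lam j).im) ^ 2 := by
      simp only [Complex.sq_norm, Complex.normSq_apply]
      simp [Complex.sub_re, Complex.sub_im, Complex.mul_re, Complex.mul_im]
      ring
    have habs := hB j
    have habs0 := norm_nonneg (-(α : ℂ) - (β : ℂ) * lam j)
    have hNub : (α + β * (lam j).re) ^ 2 + (β * (lam j).im) ^ 2 ≤ (1 + Real.sqrt 3 * γ) ^ 2 := by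
      rw [← nB]
      exact pow_le_pow_left₀ habs0 habs.2 2
    have hNlb : (1 - Real.sqrt 3 * γ) ^ 2 ≤ (α + β * (lam j).re) ^ 2 + (β * (lam j).im) ^ 2 := by
      rw [← nB]
      exact pow_le_pow_left₀ (by linarith : (0:ℝ) ≤ 1 - Real.sqrt 3 * γ) habs.1 2
    exact aux_main α β γ s (lam j).re (lam j).im (Real.sqrt 3 * γ)
      hα1 hα2 hs0 hs2 hs_lb hs_ub hbs hβ0 hβlb hγ0 hγ2 ht0 htub ht2 hsum e1 hNub hNlb
  have hsum0 : (lam 0).im + (lam 1).im + (lam 2).im = 0 := by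
    have := congrArg Complex.im hzero
    simpa using this
  rcases key 0 with ⟨h0a, h0b⟩ | ⟨h0a, h0b⟩ <;>
  rcases key 1 with ⟨h1a, h1b⟩ | ⟨h1a, h1b⟩ <;>
  rcases key 2 with ⟨h2a, h2b⟩ | ⟨h2a, h2b⟩ <;> linarith
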